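/- Consider a d-layer ReLU network with weights W_i (‖W_i‖ ≤ M) and biases b_i, and let x_i(u) denote the output of layer i on input u. Suppose u, v ∈ ℝ^k satisfy ‖u − v‖ ≤ Lδ where δ < τ/(L·max(M,1)^{d+1}) for some τ, L > 0. Then for every layer i ∈ [d] and every row j with |w_{i,j}ᵀ x_{i−1}(u) + b_{i,j}| ≥ τ, we have sign(w_{i,j}ᵀ x_{i−1}(u) + b_{i,j}) = sign(w_{i,j}ᵀ x_{i−1}(v) + b_{i,j}). -/

import Mathlib

noncomputable def opNorm {m n : ℕ} (W : Matrix (Fin m) (Fin n) ℝ) : ℝ :=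
  ‖LinearMap.toContinuousLinearMap (Matrix.toEuclideanLin W)‖

/-- Output of the `i`-th layer of a ReLU network on input `x`. -/
noncomputable def layerOut (n : ℕ → ℕ)
    (W : ∀ i, Matrix (Fin (n (i+1))) (Fin (n i)) ℝ)
    (b : ∀ i, Fin (n (i+1)) → ℝ)
    (x : EuclideanSpace ℝ (Fin (n 0))) : ∀ i, EuclideanSpace ℝ (Fin (n i))
  | 0 => x
  | (i+1) => WithLp.toLp 2 (fun j => max ((W i).mulVec (layerOut n W b x i) j + b i j) 0)

lemma abs_apply_le_norm {k : ℕ} (z : EuclideanSpace ℝ (Fin k)) (j : Fin k) :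
    |z j| ≤ ‖z‖ := by
  rw [EuclideanSpace.norm_eq]
  have : |z j| = Real.sqrt (‖z j‖ ^ 2) := by
    rw [Real.sqrt_sq_eq_abs]; simp
  rw [this]
  apply Real.sqrt_le_sqrt
  exact Finset.single_le_sum (f := fun i => ‖z i‖ ^ 2)
    (fun i _ => by positivity) (Finset.mem_univ j)

lemma euclid_norm_le {k : ℕ} (x y : EuclideanSpace ℝ (Fin k))
    (h : ∀ j, |x j| ≤ |y j|) : ‖x‖ ≤ ‖y‖ := by
  rw [EuclideanSpace.norm_eq, EuclideanSpace.norm_eq]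
  apply Real.sqrt_le_sqrt
  apply Finset.sum_le_sum
  intro j _
  have := h j
  simp only [Real.norm_eq_abs]
  exact pow_le_pow_left₀ (abs_nonneg _) this 2

lemma mulVec_diff_norm {m k : ℕ} (W : Matrix (Fin m) (Fin k) ℝ)
    (x y : EuclideanSpace ℝ (Fin k)) :
    ‖(WithLp.equiv 2 (Fin m → ℝ)).symm (fun j => W.mulVec x j - W.mulVec y j)‖
      ≤ opNorm W * ‖x - y‖ := by
  have h := (LinearMap.toContinuousLinearMap (Matrix.toEuclideanLin W)).le_opNorm (x - y)
  have heq : (LinearMap.toContinuousLinearMap (Matrix.toEuclideanLin W)) (x - y)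
      = (WithLp.equiv 2 (Fin m → ℝ)).symm (fun j => W.mulVec x j - W.mulVec y j) := by
    ext j
    simp only [LinearMap.coe_toContinuousLinearMap']
    show Matrix.toEuclideanLin W (x - y) j = W.mulVec x j - W.mulVec y j
    have : Matrix.toEuclideanLin W (x - y)
        = Matrix.toEuclideanLin W x - Matrix.toEuclideanLin W y := by
      exact map_sub _ x y
    rw [this]
    rfl
  rw [heq] at h
  exact h

theorem stmt4 (d : ℕ) (n : ℕ → ℕ)
    (W : ∀ i, Matrix (Fin (n (i+1))) (Fin (n i)) ℝ)
    (b : ∀ i, Fin (n (i+1)) → ℝ) (M L δ τ : ℝ)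
    (hW : ∀ i < d, opNorm (W i) ≤ M)
    (hL : 0 < L) (hτ : 0 < τ)
    (hδ : δ < τ / (L * max M 1 ^ (d+1)))
    (u v : EuclideanSpace ℝ (Fin (n 0))) (huv : ‖u - v‖ ≤ L * δ) :
    ∀ i < d, ∀ j, τ ≤ |(W i).mulVec (layerOut n W b u i) j + b i j| →
      Real.sign ((W i).mulVec (layerOut n W b u i) j + b i j)
        = Real.sign ((W i).mulVec (layerOut n W b v i) j + b i j) := by
  set M' := max M 1 with hM'
  have hM1 : (1:ℝ) ≤ M' := le_max_right _ _
  have hM0 : (0:ℝ) ≤ M' := by linarith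
  -- Lipschitz estimate on layers
  have key : ∀ i ≤ d, ‖layerOut n W b u i - layerOut n W b v i‖ ≤ M' ^ i * ‖u - v‖ := by
    intro i
    induction i with
    | zero => intro _; simp [layerOut]
    | succ i ih =>
      intro hid
      have hi : i ≤ d := le_of_lt (Nat.lt_of_succ_le hid)
      have hid' : i < d := Nat.lt_of_succ_le hid
      have hprev := ih hi
      have hWi : opNorm (W i) ≤ M' := le_trans (hW i hid') (le_max_left _ _)
      -- ReLU is 1-Lipschitz componentwise
      have hrelu : ‖layerOut n W b u (i+1) - layerOut n W b v (i+1)‖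
          ≤ ‖(WithLp.equiv 2 (Fin (n (i+1)) → ℝ)).symm (fun j => (W i).mulVec (layerOut n W b u i) j
              - (W i).mulVec (layerOut n W b v i) j)‖ := by
        apply euclid_norm_le
        intro j
        show |layerOut n W b u (i+1) j - layerOut n W b v (i+1) j| ≤ _
        have : layerOut n W b u (i+1) j - layerOut n W b v (i+1) j
            = max ((W i).mulVec (layerOut n W b u i) j + b i j) 0
              - max ((W i).mulVec (layerOut n W b v i) j + b i j) 0 := rfl
        rw [this]
        have := abs_max_sub_max_le_abs ((W i).mulVec (layerOut n W b u i) j + b i j)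
          ((W i).mulVec (layerOut n W b v i) j + b i j) 0
        calc _ ≤ |((W i).mulVec (layerOut n W b u i) j + b i j)
                - ((W i).mulVec (layerOut n W b v i) j + b i j)| := this
          _ = |(W i).mulVec (layerOut n W b u i) j - (W i).mulVec (layerOut n W b v i) j| := by
              ring_nf
      calc ‖layerOut n W b u (i+1) - layerOut n W b v (i+1)‖
          ≤ _ := hrelu
        _ ≤ opNorm (W i) * ‖layerOut n W b u i - layerOut n W b v i‖ := mulVec_diff_norm _ _ _
        _ ≤ M' * (M' ^ i * ‖u - v‖) := by
            apply mul_le_mul hWi hprev (norm_nonneg _) hM0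
        _ = M' ^ (i+1) * ‖u - v‖ := by ring
  intro i hid j hτj
  set a := (W i).mulVec (layerOut n W b u i) j + b i j with ha
  set c := (W i).mulVec (layerOut n W b v i) j + b i j with hc
  have hWi : opNorm (W i) ≤ M' := le_trans (hW i hid) (le_max_left _ _)
  -- bound |a - c|
  have hdiff : |a - c| ≤ M' ^ (i+1) * ‖u - v‖ := by
    have h1 : |a - c| = |(W i).mulVec (layerOut n W b u i) j
        - (W i).mulVec (layerOut n W b v i) j| := by rw [ha, hc]; ring_nf
    rw [h1]
    calc |(W i).mulVec (layerOut n W b u i) j - (W i).mulVec (layerOut n W b v i) j|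
        ≤ ‖(WithLp.equiv 2 (Fin (n (i+1)) → ℝ)).symm (fun j => (W i).mulVec (layerOut n W b u i) j
            - (W i).mulVec (layerOut n W b v i) j)‖ :=
          abs_apply_le_norm ((WithLp.equiv 2 (Fin (n (i+1)) → ℝ)).symm
            (fun j => (W i).mulVec (layerOut n W b u i) j
              - (W i).mulVec (layerOut n W b v i) j)) j
      _ ≤ opNorm (W i) * ‖layerOut n W b u i - layerOut n W b v i‖ := mulVec_diff_norm _ _ _
      _ ≤ M' * (M' ^ i * ‖u - v‖) :=
          mul_le_mul hWi (key i (le_of_lt hid)) (norm_nonneg _) hM0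
      _ = M' ^ (i+1) * ‖u - v‖ := by ring
  have hpow : (0:ℝ) < M' ^ (d+1) := by positivity
  have hLδ : L * δ < τ / M' ^ (d+1) := by
    rw [div_mul_eq_div_div_swap] at hδ
    calc L * δ < L * (τ / M' ^ (d+1) / L) := by
          apply mul_lt_mul_of_pos_left hδ hL
      _ = τ / M' ^ (d+1) := by field_simp
  have hdiff2 : |a - c| < τ := by
    have hpowle : M' ^ (i+1) ≤ M' ^ (d+1) :=
      pow_le_pow_right₀ hM1 (by omega)
    have h1 : M' ^ (i+1) * ‖u - v‖ ≤ M' ^ (d+1) * (L * δ) := by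
      apply mul_le_mul hpowle huv (norm_nonneg _) (le_of_lt hpow)
    have h2 : M' ^ (d+1) * (L * δ) < M' ^ (d+1) * (τ / M' ^ (d+1)) :=
      mul_lt_mul_of_pos_left hLδ hpow
    have h3 : M' ^ (d+1) * (τ / M' ^ (d+1)) = τ := by field_simp
    linarith
  -- conclude signs equal
  rcases abs_cases a with ⟨hax, hapos⟩ | ⟨hax, haneg⟩
  · have ha' : τ ≤ a := by linarith
    have hc' : 0 < c := by
      have := abs_lt.mp hdiff2
      linarith
    rw [Real.sign_of_pos (by linarith : (0:ℝ) < a), Real.sign_of_pos hc']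
  · have ha' : a ≤ -τ := by linarith
    have hc' : c < 0 := by
      have := abs_lt.mp hdiff2
      linarith
    rw [Real.sign_of_neg (by linarith : a < 0), Real.sign_of_neg hc']
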